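/- Fix n ≥ 2, k ≥ 2, and let N = 2^{2kn}, c_k = N^{-1}. Let Σ_k = {(x, 2^{-k}) : x ∈ cl(Δ(0, 2^{-k} c_k)) + c_k ℤ^n} ⊂ ℝ^{n+1}, where Δ(0,ρ) is the open n-disk of radius ρ. Fix X₀ ∈ Σ_k and N^{-1/2} ≤ s < 1, let K = cl(B(X₀,s)) ∩ Σ_k, and define the measure μ = 2^{kn} s^{-1} · H^n⌞K. Then for all X ∈ K, the Wolff-type potential W(μ)(X) = ∫₀¹ μ(B(X,t)) t^{-n} dt satisfies W(μ)(X) ≲ 1 with implicit constant depending only on n, and μ(K) ≳ s^{n-1}. -/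

import Mathlib

open Metric MeasureTheory Set Filter
open scoped Topology ENNReal NNReal

noncomputable section

/-- The lattice of closed `n`-disks `Σ_k` at height `2^{-k}`: disks of radius
`2^{-k} c_k` centered at `c_k ℤ^n`, with `c_k = N⁻¹ = 2^{-2kn}`. -/
def latticeSheet (n k : ℕ) : Set (EuclideanSpace ℝ (Fin n) × ℝ) :=
  {p | p.2 = ((2 : ℝ) ^ k)⁻¹ ∧
    ∃ v : EuclideanSpace ℝ (Fin n),
      (∀ i, ∃ m : ℤ, v i = ((2 : ℝ) ^ (2 * k * n))⁻¹ * (m : ℝ)) ∧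
      ‖p.1 - v‖ ≤ ((2 : ℝ) ^ k)⁻¹ * ((2 : ℝ) ^ (2 * k * n))⁻¹}

/-- The normalized measure `μ = 2^{kn} s⁻¹ · H^n ⌞ (cl B(X₀,s) ∩ Σ_k)`. -/
def wolffMeasure (n k : ℕ) (s : ℝ) (X₀ : EuclideanSpace ℝ (Fin n) × ℝ) :
    Measure (EuclideanSpace ℝ (Fin n) × ℝ) :=
  (ENNReal.ofReal ((2 : ℝ) ^ (k * n) / s)) •
    (μH[(n : ℝ)].restrict (closedBall X₀ s ∩ latticeSheet n k))

namespace Wolff15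

/-! ### Comparison of Hausdorff measure on a horizontal slice with Lebesgue measure -/

lemma euclid_hausdorff_le {n : ℕ} (hn : 1 ≤ n) (A : Set (EuclideanSpace ℝ (Fin n)))
    (hA : MeasurableSet A) : μH[(n : ℝ)] A ≤ (n : ℝ≥0∞) ^ n * volume A := by
  set e := WithLp.equiv 2 (Fin n → ℝ)
  have hanti := PiLp.antilipschitzWith_ofLp 2 (fun _ : Fin n => ℝ)
  have hsym := hanti.to_rightInverse e.right_inv
  have h1 : μH[(n : ℝ)] A = μH[(n : ℝ)] (e.symm '' (e '' A)) := by
    rw [Equiv.symm_image_image]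
  have h2 := hsym.hausdorffMeasure_image_le (d := (n : ℝ)) (by positivity) (e '' A)
  have h3 : (μH[(n : ℝ)] : Measure (Fin n → ℝ)) = volume := by
    simpa using (hausdorffMeasure_pi_real (ι := Fin n))
  have h4 : volume (⇑e '' A) = volume A := by
    rw [Equiv.image_eq_preimage_symm]
    exact (PiLp.volume_preserving_toLp (Fin n)).measure_preimage hA.nullMeasurableSet
  have hK : (((Fintype.card (Fin n) : ℝ≥0) ^ ((1 : ℝ≥0∞) / 2).toReal : ℝ≥0) : ℝ≥0∞) ^ (n : ℝ)
      ≤ (n : ℝ≥0∞) ^ n := by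
    rw [ENNReal.rpow_natCast]
    refine pow_le_pow_left₀ (by positivity) ?_ n
    rw [Fintype.card_fin]
    norm_cast
    calc (n : ℝ≥0) ^ ((1 : ℝ≥0∞) / 2).toReal ≤ (n : ℝ≥0) ^ (1 : ℝ) := by
          refine NNReal.rpow_le_rpow_of_exponent_le (by exact_mod_cast hn) ?_
          simp [ENNReal.toReal_div]
          norm_num
      _ = n := by simp
  calc μH[(n : ℝ)] A = μH[(n : ℝ)] (e.symm '' (e '' A)) := h1
    _ ≤ _ * μH[(n : ℝ)] (e '' A) := h2
    _ = _ * volume (e '' A) := by rw [h3]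
    _ = _ * volume A := by rw [h4]
    _ ≤ (n : ℝ≥0∞) ^ n * volume A := by exact mul_le_mul_left hK _

lemma euclid_hausdorff_ge {n : ℕ} (A : Set (EuclideanSpace ℝ (Fin n)))
    (hA : MeasurableSet A) : volume A ≤ μH[(n : ℝ)] A := by
  set e := WithLp.equiv 2 (Fin n → ℝ)
  have h4 : volume (⇑e '' A) = volume A := by
    rw [Equiv.image_eq_preimage_symm]
    exact (PiLp.volume_preserving_toLp (Fin n)).measure_preimage hA.nullMeasurableSet
  have h3 : (μH[(n : ℝ)] : Measure (Fin n → ℝ)) = volume := by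
    simpa using (hausdorffMeasure_pi_real (ι := Fin n))
  have h2 := (PiLp.lipschitzWith_ofLp 2 (fun _ : Fin n => ℝ)).hausdorffMeasure_image_le
    (d := (n : ℝ)) (by positivity) A
  calc volume A = volume (e '' A) := h4.symm
    _ = μH[(n : ℝ)] (e '' A) := by rw [h3]
    _ ≤ ((1 : ℝ≥0) : ℝ≥0∞) ^ (n : ℝ) * μH[(n : ℝ)] A := h2
    _ = μH[(n : ℝ)] A := by simp

lemma slice_image {n : ℕ} (A : Set (EuclideanSpace ℝ (Fin n))) (h : ℝ) :
    (fun x : EuclideanSpace ℝ (Fin n) => (x, h)) '' A = A ×ˢ {h} := by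
  ext ⟨a, b⟩
  simp only [Set.mem_image, Set.mem_prod, Set.mem_singleton_iff, Prod.mk.injEq]
  constructor
  · rintro ⟨x, hx, rfl, rfl⟩; exact ⟨hx, rfl⟩
  · rintro ⟨ha, rfl⟩; exact ⟨a, ha, rfl, rfl⟩

lemma slice_isometry {n : ℕ} (h : ℝ) :
    Isometry (fun x : EuclideanSpace ℝ (Fin n) => (x, h)) := by
  intro x y
  simp [Prod.edist_eq]

lemma hausdorff_slice {n : ℕ} (A : Set (EuclideanSpace ℝ (Fin n))) (h : ℝ) :
    μH[(n : ℝ)] (A ×ˢ {h}) = μH[(n : ℝ)] A := by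
  rw [← slice_image]
  exact (slice_isometry h).hausdorffMeasure_image (Or.inl (by positivity)) A

lemma slice_le {n : ℕ} (hn : 1 ≤ n) (A : Set (EuclideanSpace ℝ (Fin n)))
    (hA : MeasurableSet A) (h : ℝ) :
    μH[(n : ℝ)] (A ×ˢ {h}) ≤ (n : ℝ≥0∞) ^ n * volume A := by
  rw [hausdorff_slice]; exact euclid_hausdorff_le hn A hA

lemma slice_ge {n : ℕ} (A : Set (EuclideanSpace ℝ (Fin n)))
    (hA : MeasurableSet A) (h : ℝ) :
    volume A ≤ μH[(n : ℝ)] (A ×ˢ {h}) := by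
  rw [hausdorff_slice]; exact euclid_hausdorff_ge A hA

/-! ### The planar lattice set and counting estimates -/

/-- lattice point map -/
def φ (n : ℕ) (ε : ℝ) (m : Fin n → ℤ) : EuclideanSpace ℝ (Fin n) := WithLp.toLp 2 (fun i => ε * m i)

/-- union of closed balls of radius ρ around the lattice εℤ^n -/
def latticeSet (n : ℕ) (ε ρ : ℝ) : Set (EuclideanSpace ℝ (Fin n)) :=
  {x | ∃ v : EuclideanSpace ℝ (Fin n), (∀ i, ∃ m : ℤ, v i = ε * (m : ℝ)) ∧ ‖x - v‖ ≤ ρ}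

set_option maxHeartbeats 1000000 in
lemma coord_le_norm {n : ℕ} (y : EuclideanSpace ℝ (Fin n)) (i : Fin n) : |y i| ≤ ‖y‖ := by
  rw [EuclideanSpace.norm_eq]
  have h1 : |y i| ^ 2 ≤ ∑ j, ‖y j‖ ^ 2 :=
    Finset.single_le_sum (f := fun j => ‖y j‖ ^ 2) (fun j _ => sq_nonneg _)
      (Finset.mem_univ i) |>.trans_eq' (by rw [Real.norm_eq_abs])
  rw [sq_abs] at h1
  calc |y i| = Real.sqrt (y i ^ 2) := (Real.sqrt_sq_eq_abs _).symm
    _ ≤ _ := Real.sqrt_le_sqrt h1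

set_option maxHeartbeats 1000000 in
lemma norm_le_of_coords {n : ℕ} (y : EuclideanSpace ℝ (Fin n)) {c : ℝ} (hc : 0 ≤ c)
    (h : ∀ i, |y i| ≤ c) : ‖y‖ ≤ n * c := by
  rw [EuclideanSpace.norm_eq]
  have hsum : ∑ i, ‖y i‖ ^ 2 ≤ (n : ℝ) * c ^ 2 := by
    calc ∑ i, ‖y i‖ ^ 2 ≤ ∑ _i : Fin n, c ^ 2 := by
          refine Finset.sum_le_sum fun i _ => ?_
          rw [Real.norm_eq_abs]
          exact pow_le_pow_left₀ (abs_nonneg _) (h i) 2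
      _ = (n : ℝ) * c ^ 2 := by rw [Finset.sum_const, Finset.card_univ, Fintype.card_fin,
          nsmul_eq_mul]
  have h2 : (n : ℝ) * c ^ 2 ≤ (n * c) ^ 2 := by
    have : (n : ℝ) ≤ (n : ℝ) ^ 2 := by
      rcases Nat.eq_zero_or_pos n with h0 | h0
      · simp [h0]
      · nlinarith [(Nat.one_le_cast (α := ℝ)).2 h0]
    nlinarith [sq_nonneg c]
  calc Real.sqrt (∑ i, ‖y i‖ ^ 2) ≤ Real.sqrt ((n * c) ^ 2) :=
        Real.sqrt_le_sqrt (hsum.trans h2)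
    _ = n * c := Real.sqrt_sq (by positivity)

lemma latticeSet_eq (n : ℕ) (ε ρ : ℝ) :
    latticeSet n ε ρ = ⋃ m : Fin n → ℤ, closedBall (φ n ε m) ρ := by
  ext x
  simp only [latticeSet, mem_setOf_eq, mem_iUnion, mem_closedBall, dist_eq_norm]
  constructor
  · rintro ⟨v, hv, hxv⟩
    choose m hm using hv
    refine ⟨m, ?_⟩
    have : v = φ n ε m := (WithLp.ext_iff _).2 (funext fun i => hm i)
    rwa [← this]
  · rintro ⟨m, hm⟩
    exact ⟨φ n ε m, fun i => ⟨m i, rfl⟩, hm⟩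

lemma latticeSet_measurable (n : ℕ) (ε ρ : ℝ) :
    MeasurableSet (latticeSet n ε ρ) := by
  rw [latticeSet_eq n ε ρ]
  exact MeasurableSet.iUnion fun m => measurableSet_closedBall

/-- Upper counting bound. -/
lemma latticeSet_inter_le {n : ℕ} {ε ρ : ℝ} (hε : 0 < ε) (hρ : 0 < ρ)
    (x : EuclideanSpace ℝ (Fin n)) {r : ℝ} (hr : 0 ≤ r) :
    volume (latticeSet n ε ρ ∩ closedBall x r) ≤
      ENNReal.ofReal ((2 * (r + ρ) / ε + 2) ^ n * ρ ^ n) *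
        volume (ball (0 : EuclideanSpace ℝ (Fin n)) 1) := by
  classical
  set F : Finset (Fin n → ℤ) :=
    Fintype.piFinset (fun i => Finset.Icc ⌈(x i - (r + ρ)) / ε⌉ ⌊(x i + (r + ρ)) / ε⌋) with hF
  have hsub : latticeSet n ε ρ ∩ closedBall x r ⊆ ⋃ m ∈ F, closedBall (φ n ε m) ρ := by
    rintro y ⟨⟨v, hv, hyv⟩, hyx⟩
    choose m hm using hv
    have hveq : v = φ n ε m := (WithLp.ext_iff _).2 (funext fun i => hm i)
    have hvx : ∀ i, |v i - x i| ≤ r + ρ := by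
      intro i
      have h1 : |(v - x) i| ≤ ‖v - x‖ := coord_le_norm _ i
      have h2 : ‖v - x‖ ≤ ρ + r := by
        calc ‖v - x‖ ≤ ‖v - y‖ + ‖y - x‖ := norm_sub_le_norm_sub_add_norm_sub _ _ _
          _ ≤ ρ + r := by
              have : ‖v - y‖ = ‖y - v‖ := norm_sub_rev _ _
              rw [this]
              exact add_le_add hyv (by rwa [← dist_eq_norm] )
      have h3 : (v - x) i = v i - x i := rfl
      rw [h3] at h1
      linarith [h1, h2]
    have hmF : m ∈ F := by
      rw [hF, Fintype.mem_piFinset]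
      intro i
      rw [Finset.mem_Icc]
      have h := abs_le.1 (hvx i)
      have hmi : v i = ε * m i := hm i
      constructor
      · rw [Int.ceil_le]
        rw [div_le_iff₀ hε]
        nlinarith [h.1, hmi]
      · rw [Int.le_floor]
        rw [le_div_iff₀ hε]
        nlinarith [h.2, hmi]
    refine mem_biUnion hmF ?_
    rw [mem_closedBall, dist_eq_norm, ← hveq]
    exact hyv
  have hmeas := (measure_mono hsub).trans
    (MeasureTheory.measure_biUnion_finset_le (μ := volume) F _)
  have hball : ∀ m : Fin n → ℤ, volume (closedBall (φ n ε m) ρ) =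
      ENNReal.ofReal (ρ ^ n) * volume (ball (0 : EuclideanSpace ℝ (Fin n)) 1) := by
    intro m
    rw [Measure.addHaar_closedBall volume _ hρ.le, finrank_euclideanSpace_fin]
  rw [Finset.sum_congr rfl (fun m _ => hball m), Finset.sum_const, nsmul_eq_mul] at hmeas
  refine hmeas.trans ?_
  rw [← mul_assoc]
  refine mul_le_mul_left ?_ _
  rw [← ENNReal.ofReal_natCast, ← ENNReal.ofReal_mul (by positivity)]
  refine ENNReal.ofReal_le_ofReal ?_
  have hcard : (F.card : ℝ) ≤ (2 * (r + ρ) / ε + 2) ^ n := by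
    rw [hF, Fintype.card_piFinset]
    have h1 : ∀ i : Fin n, ((Finset.Icc ⌈(x i - (r + ρ)) / ε⌉ ⌊(x i + (r + ρ)) / ε⌋).card : ℝ)
        ≤ 2 * (r + ρ) / ε + 2 := by
      intro i
      rw [Int.card_Icc]
      set a := ⌈(x i - (r + ρ)) / ε⌉
      set b := ⌊(x i + (r + ρ)) / ε⌋
      have h2 : ((b + 1 - a).toNat : ℝ) ≤ max ((b + 1 - a : ℤ) : ℝ) 0 := by
        have := Int.toNat_eq_max (b + 1 - a)
        exact_mod_cast this.le
      have h3 : ((b + 1 - a : ℤ) : ℝ) ≤ 2 * (r + ρ) / ε + 2 := by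
        push_cast
        have hb : (b : ℝ) ≤ (x i + (r + ρ)) / ε := Int.floor_le _
        have ha : ((x i - (r + ρ)) / ε) ≤ (a : ℝ) := Int.le_ceil _
        have : (x i + (r + ρ)) / ε - (x i - (r + ρ)) / ε = 2 * (r + ρ) / ε := by
          field_simp; ring
        linarith
      have h4 : (0 : ℝ) ≤ 2 * (r + ρ) / ε + 2 := by positivity
      calc ((b + 1 - a).toNat : ℝ) ≤ _ := h2
        _ ≤ 2 * (r + ρ) / ε + 2 := max_le h3 h4
    calc ((∏ i, (Finset.Icc ⌈(x i - (r + ρ)) / ε⌉ ⌊(x i + (r + ρ)) / ε⌋).card : ℕ) : ℝ)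
        = ∏ i : Fin n, ((Finset.Icc ⌈(x i - (r + ρ)) / ε⌉ ⌊(x i + (r + ρ)) / ε⌋).card : ℝ) := by
          push_cast; rfl
      _ ≤ ∏ i : Fin n, (2 * (r + ρ) / ε + 2) := by
          exact Finset.prod_le_prod (fun i _ => by positivity) (fun i _ => h1 i)
      _ = (2 * (r + ρ) / ε + 2) ^ n := by
          rw [Finset.prod_const, Finset.card_univ, Fintype.card_fin]
  exact mul_le_mul_of_nonneg_right hcard (by positivity)

/-- Lower counting bound. -/
lemma latticeSet_inter_ge {n : ℕ} {ε ρ : ℝ} (hε : 0 < ε) (hρ : 0 < ρ) (h2ρ : 2 * ρ < ε)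
    (x : EuclideanSpace ℝ (Fin n)) {L : ℕ} {r : ℝ}
    (hfit : (n : ℝ) * L * ε + ρ ≤ r) :
    ENNReal.ofReal ((L : ℝ) ^ n * ρ ^ n) * volume (ball (0 : EuclideanSpace ℝ (Fin n)) 1) ≤
      volume (latticeSet n ε ρ ∩ closedBall x r) := by
  classical
  set F : Finset (Fin n → ℤ) :=
    Fintype.piFinset (fun i => Finset.Icc ⌈x i / ε⌉ (⌈x i / ε⌉ + L - 1)) with hF
  have hcoord : ∀ m ∈ F, ∀ i, |φ n ε m i - x i| ≤ L * ε := by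
    intro m hm i
    rw [hF, Fintype.mem_piFinset] at hm
    have h := Finset.mem_Icc.1 (hm i)
    have h1 : (x i / ε) ≤ (m i : ℝ) := le_trans (Int.le_ceil _) (Int.cast_le.2 h.1)
    have h2 : (m i : ℝ) ≤ x i / ε + L := by
      have : (m i : ℝ) ≤ (⌈x i / ε⌉ : ℝ) + L - 1 := by
        exact_mod_cast h.2
      have hceil : (⌈x i / ε⌉ : ℝ) < x i / ε + 1 := Int.ceil_lt_add_one _
      linarith
    have hφ : φ n ε m i = ε * m i := rfl
    rw [hφ, abs_le]
    constructor
    · have := mul_le_mul_of_nonneg_left h1 hε.le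
      rw [mul_div_cancel₀ _ hε.ne'] at this
      · linarith [mul_nonneg (Nat.cast_nonneg L : (0:ℝ) ≤ L) hε.le]
    · have := mul_le_mul_of_nonneg_left h2 hε.le
      rw [mul_add, mul_div_cancel₀ _ hε.ne'] at this
      nlinarith
  have hsub : ∀ m ∈ F, closedBall (φ n ε m) ρ ⊆ latticeSet n ε ρ ∩ closedBall x r := by
    intro m hm y hy
    rw [mem_closedBall, dist_eq_norm] at hy
    constructor
    · exact ⟨φ n ε m, fun i => ⟨m i, rfl⟩, hy⟩
    · rw [mem_closedBall]
      have hdx : dist (φ n ε m) x ≤ (n : ℝ) * (L * ε) := by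
        rw [dist_eq_norm]
        exact norm_le_of_coords _ (by positivity) (fun i => hcoord m hm i)
      calc dist y x ≤ dist y (φ n ε m) + dist (φ n ε m) x := dist_triangle _ _ _
        _ ≤ ρ + (n : ℝ) * (L * ε) := by
            refine add_le_add ?_ hdx
            rwa [dist_eq_norm]
        _ ≤ r := by nlinarith
  have hdisj : (F : Set (Fin n → ℤ)).PairwiseDisjoint (fun m => closedBall (φ n ε m) ρ) := by
    intro m hm m' hm' hne
    have : ∃ i, m i ≠ m' i := Function.ne_iff.1 hne
    obtain ⟨i, hi⟩ := this
    refine closedBall_disjoint_closedBall ?_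
    have h1 : ε ≤ |φ n ε m i - φ n ε m' i| := by
      have : φ n ε m i - φ n ε m' i = ε * ((m i : ℝ) - m' i) := by
        show ε * m i - ε * m' i = _; ring
      rw [this, abs_mul, abs_of_pos hε]
      have : (1 : ℝ) ≤ |(m i : ℝ) - m' i| := by
        have : (1 : ℤ) ≤ |m i - m' i| := Int.one_le_abs (sub_ne_zero.2 hi)
        exact_mod_cast (by exact_mod_cast this : (1:ℝ) ≤ ((|m i - m' i| : ℤ) : ℝ))
      nlinarith
    have h2 : |φ n ε m i - φ n ε m' i| ≤ dist (φ n ε m) (φ n ε m') := by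
      rw [dist_eq_norm]
      exact coord_le_norm (φ n ε m - φ n ε m') i
    linarith
  have hball : ∀ m : Fin n → ℤ, volume (closedBall (φ n ε m) ρ) =
      ENNReal.ofReal (ρ ^ n) * volume (ball (0 : EuclideanSpace ℝ (Fin n)) 1) := by
    intro m
    rw [Measure.addHaar_closedBall volume _ hρ.le, finrank_euclideanSpace_fin]
  have hcard : F.card = L ^ n := by
    rw [hF, Fintype.card_piFinset]
    have : ∀ i : Fin n, (Finset.Icc ⌈x i / ε⌉ (⌈x i / ε⌉ + L - 1)).card = L := by
      intro i
      rw [Int.card_Icc]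
      simp
    rw [Finset.prod_congr rfl (fun i _ => this i), Finset.prod_const, Finset.card_univ,
      Fintype.card_fin]
  calc ENNReal.ofReal ((L : ℝ) ^ n * ρ ^ n) * volume (ball (0 : EuclideanSpace ℝ (Fin n)) 1)
      = (F.card : ℝ≥0∞) *
        (ENNReal.ofReal (ρ ^ n) * volume (ball (0 : EuclideanSpace ℝ (Fin n)) 1)) := by
        rw [hcard, ENNReal.ofReal_mul (by positivity), ← mul_assoc]
        congr 1
        rw [← ENNReal.ofReal_natCast]
        congr 1
        push_cast; ring
    _ = ∑ m ∈ F, volume (closedBall (φ n ε m) ρ) := by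
        rw [Finset.sum_congr rfl (fun m _ => hball m), Finset.sum_const, nsmul_eq_mul]
    _ = volume (⋃ m ∈ F, closedBall (φ n ε m) ρ) :=
        (measure_biUnion_finset hdisj (fun m _ => measurableSet_closedBall)).symm
    _ ≤ volume (latticeSet n ε ρ ∩ closedBall x r) := by
        refine measure_mono ?_
        exact Set.iUnion₂_subset hsub

/-! ### The tail integral -/

lemma tail_bound {n : ℕ} (hn : 2 ≤ n) {a : ℝ} (ha : 0 < a) (ha1 : a ≤ 1) :
    ∫⁻ t in Set.Ioc a 1, ENNReal.ofReal ((t ^ n)⁻¹) ≤ ENNReal.ofReal (a * (a ^ n)⁻¹) := by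
  have hcont : ContinuousOn (fun t : ℝ => (t ^ n)⁻¹) (Set.Icc a 1) := by
    refine ContinuousOn.inv₀ (continuous_pow n).continuousOn ?_
    intro t ht
    exact pow_ne_zero n (ne_of_gt (lt_of_lt_of_le ha ht.1))
  have hint : IntegrableOn (fun t : ℝ => (t ^ n)⁻¹) (Set.Ioc a 1) :=
    (hcont.integrableOn_compact isCompact_Icc).mono_set Set.Ioc_subset_Icc_self
  rw [← MeasureTheory.ofReal_integral_eq_lintegral_ofReal hint
    ((ae_restrict_iff' measurableSet_Ioc).2 (Filter.Eventually.of_forall fun t ht =>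
      inv_nonneg.2 (pow_nonneg (ha.trans ht.1).le n)))]
  refine ENNReal.ofReal_le_ofReal ?_
  have heq : ∫ t in Set.Ioc a 1, (t ^ n)⁻¹ = ∫ t in a..1, (t : ℝ) ^ (-(n : ℤ)) := by
    rw [intervalIntegral.integral_of_le ha1]
    refine setIntegral_congr_fun measurableSet_Ioc fun t ht => ?_
    rw [zpow_neg, zpow_natCast]
  have hmem : (0 : ℝ) ∉ Set.uIcc a 1 := by
    rw [Set.uIcc_of_le ha1]
    rintro ⟨h0, -⟩
    linarith
  rw [heq, integral_zpow (Or.inr ⟨by omega, hmem⟩)]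
  have hne : a ≠ 0 := ha.ne'
  set B : ℝ := a ^ ((-(n : ℤ)) + 1) with hB
  have hBval : B = a * (a ^ n)⁻¹ := by
    rw [hB, zpow_add₀ hne, zpow_neg, zpow_natCast, zpow_one]
    ring
  have hB1 : 1 ≤ B := one_le_zpow_of_nonpos₀ ha ha1 (by omega)
  have hval : (1 : ℝ) ^ ((-(n : ℤ)) + 1) = 1 := one_zpow _
  rw [hval, ← hBval]
  have hden : ((-(n : ℤ) : ℤ) : ℝ) + 1 = 1 - (n : ℝ) := by push_cast; ring
  rw [hden]
  have hn1 : (1 : ℝ) ≤ (n : ℝ) - 1 := by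
    have : (2 : ℝ) ≤ (n : ℝ) := by exact_mod_cast hn
    linarith
  have : (1 - B) / (1 - (n : ℝ)) = (B - 1) / ((n : ℝ) - 1) := by
    rw [div_eq_div_iff] <;> try ring
    · linarith
    · linarith
  rw [this]
  calc (B - 1) / ((n : ℝ) - 1) ≤ B - 1 := div_le_self (by linarith) hn1
    _ ≤ B := by linarith

lemma sheet_eq (n k : ℕ) : latticeSheet n k =
    (latticeSet n (((2:ℝ) ^ (2 * k * n))⁻¹)
      (((2:ℝ) ^ k)⁻¹ * ((2:ℝ) ^ (2 * k * n))⁻¹)) ×ˢ {((2:ℝ) ^ k)⁻¹} := by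
  ext p
  simp only [latticeSheet, latticeSet, Set.mem_setOf_eq, Set.mem_prod, Set.mem_singleton_iff]
  tauto

lemma count_simp {n : ℕ} {hgt ε ρ P s t : ℝ} (hε : 0 < ε) (hs : 0 < s)
    (hρ : ρ = hgt * ε) (hgt0 : 0 < hgt) (hP : hgt ^ n * P = 1)
    (ht : 0 ≤ t) (h2ρ : 2 * ρ ≤ ε) :
    P / s * ((2 * (t + ρ) / ε + 2) ^ n * ρ ^ n) ≤ (2 * t + 3 * ε) ^ n / s := by
  have hρ0 : 0 ≤ ρ := by rw [hρ]; positivity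
  have hbase : (2 * (t + ρ) / ε + 2) * ρ = (2 * t + 2 * ρ + 2 * ε) * hgt := by
    subst hρ; field_simp
  have h1 : (2 * (t + ρ) / ε + 2) ^ n * ρ ^ n = (2*t+2*ρ+2*ε) ^ n * hgt ^ n := by
    rw [← mul_pow, hbase, mul_pow]
  rw [h1]
  have h2 : (2*t+2*ρ+2*ε) ^ n ≤ (2*t+3*ε) ^ n := by
    apply pow_le_pow_left₀ (by positivity) (by linarith)
  calc P / s * ((2*t+2*ρ+2*ε) ^ n * hgt ^ n)
      = (2*t+2*ρ+2*ε) ^ n * (hgt ^ n * P) / s := by ring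
    _ = (2*t+2*ρ+2*ε) ^ n / s := by rw [hP]; ring_nf
    _ ≤ (2*t+3*ε) ^ n / s := by gcongr
end Wolff15

open Wolff15

set_option maxHeartbeats 12000000 in
/-- The Wolff-type potential of `μ` is bounded on `K`, with constant depending only on
`n`, and `μ(K) ≳ s^{n-1}`. -/
theorem stmt15 {n : ℕ} (hn : 2 ≤ n) :
    ∃ C : ℝ, 0 < C ∧
      ∀ k : ℕ, 2 ≤ k →
        ∀ X₀ ∈ latticeSheet n k, ∀ s : ℝ,
          (Real.sqrt ((2 : ℝ) ^ (2 * k * n)))⁻¹ ≤ s → s < 1 →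
          (∀ X ∈ closedBall X₀ s ∩ latticeSheet n k,
            ∫⁻ t in Set.Ioo (0 : ℝ) 1,
                (wolffMeasure n k s X₀) (ball X t) / ENNReal.ofReal (t ^ n)
              ≤ ENNReal.ofReal C) ∧
          ENNReal.ofReal (s ^ (n - 1) / C) ≤
            (wolffMeasure n k s X₀) (closedBall X₀ s ∩ latticeSheet n k) := by
  classical
  have hn1 : 1 ≤ n := by omega
  haveI : Nonempty (Fin n) := ⟨⟨0, by omega⟩⟩
  haveI : Nontrivial (EuclideanSpace ℝ (Fin n)) := inferInstance
  set ιb : ℝ≥0∞ := volume (ball (0 : EuclideanSpace ℝ (Fin n)) 1) with hιb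
  have hι0 : ιb ≠ 0 := (measure_ball_pos volume _ one_pos).ne'
  have hιtop : ιb ≠ ⊤ := measure_ball_lt_top.ne
  set B : ℝ := ιb.toReal with hBdef
  have hB : 0 < B := ENNReal.toReal_pos hι0 hιtop
  have hιeq : ιb = ENNReal.ofReal B := (ENNReal.ofReal_toReal hιtop).symm
  set C : ℝ := (B + 1) * ((n : ℝ) ^ n * 4 * 5 ^ n) + ((4 : ℝ) * n) ^ n / B with hC
  have hCpos : 0 < C := by rw [hC]; positivity
  refine ⟨C, hCpos, ?_⟩
  intro k hk X₀ hX₀ s hs1 hs2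
  -- basic numeric setup
  set N : ℝ := (2 : ℝ) ^ (2 * k * n) with hN
  set P : ℝ := (2 : ℝ) ^ (k * n) with hP
  set ε : ℝ := N⁻¹ with hε
  set hgt : ℝ := ((2 : ℝ) ^ k)⁻¹ with hh
  set ρ : ℝ := hgt * ε with hρ
  have hNpos : (0 : ℝ) < N := by rw [hN]; positivity
  have hPpos : (0 : ℝ) < P := by rw [hP]; positivity
  have hN2 : N = P ^ 2 := by rw [hN, hP, ← pow_mul]; congr 1; ring
  have hsqrt : Real.sqrt N = P := by rw [hN2, Real.sqrt_sq hPpos.le]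
  have hs1' : P⁻¹ ≤ s := by rw [← hsqrt]; exact hs1
  have hs0 : 0 < s := lt_of_lt_of_le (by positivity) hs1'
  have hεpos : 0 < ε := by rw [hε]; positivity
  have hgtpos : 0 < hgt := by rw [hh]; positivity
  have hρpos : 0 < ρ := by rw [hρ]; positivity
  have hgt_le : hgt ≤ (4 : ℝ)⁻¹ := by
    rw [hh]
    have h4 : (4 : ℝ) ≤ (2 : ℝ) ^ k := by
      calc (4 : ℝ) = 2 ^ 2 := by norm_num
        _ ≤ (2 : ℝ) ^ k := pow_le_pow_right₀ one_le_two hk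
    exact inv_anti₀ (by norm_num) h4
  have hgt_le1 : hgt ≤ 1 := hgt_le.trans (by norm_num)
  have h2ρε : 2 * ρ < ε := by rw [hρ]; nlinarith
  have hPn : hgt ^ n * P = 1 := by
    rw [hh, hP, inv_pow, ← pow_mul]
    exact inv_mul_cancel₀ (by positivity)
  have hεN : ε = P⁻¹ * P⁻¹ := by rw [hε, hN2, sq, mul_inv]
  have hεs : ε ≤ s * P⁻¹ := by
    rw [hεN]
    exact mul_le_mul_of_nonneg_right hs1' (by positivity)
  have hP4 : (4 : ℝ) ≤ P := by
    rw [hP]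
    calc (4 : ℝ) = 2 ^ 2 := by norm_num
      _ ≤ 2 ^ (k * n) := pow_le_pow_right₀ one_le_two (by nlinarith)
  have hεs2 : ε ≤ s / 2 := by
    have h1 : P⁻¹ ≤ (4 : ℝ)⁻¹ := inv_anti₀ (by norm_num) hP4
    calc ε ≤ s * P⁻¹ := hεs
      _ ≤ s * (4 : ℝ)⁻¹ := by nlinarith
      _ ≤ s / 2 := by nlinarith
  have hε_le_s : ε ≤ s := hεs2.trans (by linarith)
  have hPε : P * ε ≤ s := by
    calc P * ε ≤ P * (s * P⁻¹) := by nlinarith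
      _ = s := by field_simp
  -- structure of the sheet
  have hfold : latticeSheet n k = latticeSet n ε ρ ×ˢ {hgt} := by
    rw [hρ, hh, hε, hN]
    exact sheet_eq n k
  have hX₀2 : X₀.2 = hgt := by rw [hh]; exact hX₀.1
  have hSm : MeasurableSet (latticeSet n ε ρ) := latticeSet_measurable n ε ρ
  have hKeq : closedBall X₀ s ∩ latticeSheet n k
      = (closedBall X₀.1 s ∩ latticeSet n ε ρ) ×ˢ {hgt} := by
    rw [hfold]
    ext p
    simp only [Set.mem_inter_iff, Set.mem_prod, Set.mem_singleton_iff]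
    constructor
    · rintro ⟨hb, hS, hp2⟩
      refine ⟨⟨?_, hS⟩, hp2⟩
      have hb' : p ∈ closedBall X₀.1 s ×ˢ closedBall X₀.2 s := by
        rw [closedBall_prod_same]
        simpa using hb
      exact hb'.1
    · rintro ⟨⟨hb1, hS⟩, hp2⟩
      refine ⟨?_, hS, hp2⟩
      have hb' : p ∈ closedBall X₀.1 s ×ˢ closedBall X₀.2 s := by
        refine ⟨hb1, ?_⟩
        simp only [mem_closedBall]
        rw [hp2, hX₀2, dist_self]
        exact hs0.le
      rwa [closedBall_prod_same, Prod.mk.eta] at hb'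
  have happly : ∀ A : Set (EuclideanSpace ℝ (Fin n) × ℝ), MeasurableSet A →
      wolffMeasure n k s X₀ A
        = ENNReal.ofReal (P / s) * μH[(n : ℝ)] (A ∩ (closedBall X₀ s ∩ latticeSheet n k)) := by
    intro A hA
    simp only [wolffMeasure, Measure.smul_apply, smul_eq_mul, Measure.restrict_apply hA]
    rfl
  constructor
  · -- the potential bound
    intro X hX
    have hX2 : X.2 = hgt := by rw [hh]; exact hX.2.1
    have hXK : X ∈ (closedBall X₀.1 s ∩ latticeSet n ε ρ) ×ˢ {hgt} := by
      rw [← hKeq]; exact hX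
    set D1 : ℝ≥0∞ := (n : ℝ≥0∞) ^ n * ιb with hD1
    have hballsub : ∀ t : ℝ,
        ball X t ∩ (closedBall X₀ s ∩ latticeSheet n k)
          ⊆ (ball X.1 t ∩ latticeSet n ε ρ) ×ˢ {hgt} := by
      intro t p hp
      obtain ⟨hpb, hpK⟩ := hp
      have hp2 : p.2 = hgt := by rw [hh]; exact hpK.2.1
      have hp1 : p.1 ∈ latticeSet n ε ρ := by
        have h' : p ∈ (closedBall X₀.1 s ∩ latticeSet n ε ρ) ×ˢ {hgt} := by
          rw [← hKeq]; exact hpK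
        exact h'.1.2
      refine ⟨⟨?_, hp1⟩, hp2⟩
      have hb' : p ∈ ball X.1 t ×ˢ ball X.2 t := by
        rw [ball_prod_same, Prod.mk.eta]
        exact hpb
      exact hb'.1
    -- bound 1 : via the full hyperplane
    have hW1 : ∀ t : ℝ, 0 < t → wolffMeasure n k s X₀ (ball X t)
        ≤ ENNReal.ofReal (P / s) * ENNReal.ofReal (t ^ n) * D1 := by
      intro t htpos
      rw [happly _ measurableSet_ball]
      refine le_trans (mul_le_mul_right (measure_mono (hballsub t)) _) ?_
      refine le_trans (mul_le_mul_right
        (slice_le hn1 _ (measurableSet_ball.inter hSm) hgt) _) ?_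
      refine le_trans (mul_le_mul_right (mul_le_mul_right
        (measure_mono Set.inter_subset_left) _) _) ?_
      rw [Measure.addHaar_ball volume X.1 htpos.le, finrank_euclideanSpace_fin]
      apply le_of_eq
      rw [hD1, ← hιb]
      ring
    -- bound 2 : via lattice counting, radius t
    have hW2 : ∀ t : ℝ, 0 ≤ t → wolffMeasure n k s X₀ (ball X t)
        ≤ ENNReal.ofReal ((2 * t + 3 * ε) ^ n / s) * D1 := by
      intro t htpos
      rw [happly _ measurableSet_ball]
      refine le_trans (mul_le_mul_right (measure_mono (hballsub t)) _) ?_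
      refine le_trans (mul_le_mul_right
        (slice_le hn1 _ (measurableSet_ball.inter hSm) hgt) _) ?_
      have hsub2 : ball X.1 t ∩ latticeSet n ε ρ ⊆ latticeSet n ε ρ ∩ closedBall X.1 t := by
        rintro y ⟨hy1, hy2⟩; exact ⟨hy2, ball_subset_closedBall hy1⟩
      refine le_trans (mul_le_mul_right (mul_le_mul_right (measure_mono hsub2) _) _) ?_
      refine le_trans (mul_le_mul_right (mul_le_mul_right
        (latticeSet_inter_le hεpos hρpos X.1 htpos) _) _) ?_
      have hreal : P / s * ((2 * (t + ρ) / ε + 2) ^ n * ρ ^ n) ≤ (2 * t + 3 * ε) ^ n / s :=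
        count_simp hεpos hs0 hρ hgtpos hPn htpos h2ρε.le
      calc ENNReal.ofReal (P / s) * ((n : ℝ≥0∞) ^ n
            * (ENNReal.ofReal ((2 * (t + ρ) / ε + 2) ^ n * ρ ^ n) * ιb))
          = ENNReal.ofReal (P / s) * ENNReal.ofReal ((2 * (t + ρ) / ε + 2) ^ n * ρ ^ n) * D1 := by
            rw [hD1]; ring
        _ = ENNReal.ofReal (P / s * ((2 * (t + ρ) / ε + 2) ^ n * ρ ^ n)) * D1 := by
            rw [ENNReal.ofReal_mul (by positivity : (0:ℝ) ≤ P / s),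
              ENNReal.ofReal_mul (by positivity : (0:ℝ) ≤ (2 * (t + ρ) / ε + 2) ^ n)]
        _ ≤ ENNReal.ofReal ((2 * t + 3 * ε) ^ n / s) * D1 := by
            exact mul_le_mul_left (ENNReal.ofReal_le_ofReal hreal) _
    -- total mass bound
    have hWtot : ∀ A : Set (EuclideanSpace ℝ (Fin n) × ℝ), MeasurableSet A →
        wolffMeasure n k s X₀ A ≤ ENNReal.ofReal (5 ^ n * s ^ n / s) * D1 := by
      intro A hA
      rw [happly _ hA]
      refine le_trans (mul_le_mul_right (measure_mono Set.inter_subset_right) _) ?_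
      rw [hKeq]
      refine le_trans (mul_le_mul_right
        (slice_le hn1 _ (measurableSet_closedBall.inter hSm) hgt) _) ?_
      have hsub2 : closedBall X₀.1 s ∩ latticeSet n ε ρ
          ⊆ latticeSet n ε ρ ∩ closedBall X₀.1 s := by
        rintro y ⟨hy1, hy2⟩; exact ⟨hy2, hy1⟩
      refine le_trans (mul_le_mul_right (mul_le_mul_right (measure_mono hsub2) _) _) ?_
      refine le_trans (mul_le_mul_right (mul_le_mul_right
        (latticeSet_inter_le hεpos hρpos X₀.1 hs0.le) _) _) ?_
      have hreal : P / s * ((2 * (s + ρ) / ε + 2) ^ n * ρ ^ n) ≤ 5 ^ n * s ^ n / s := by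
        refine le_trans (count_simp hεpos hs0 hρ hgtpos hPn hs0.le h2ρε.le) ?_
        have : (2 * s + 3 * ε) ^ n ≤ (5 * s) ^ n :=
          pow_le_pow_left₀ (by positivity) (by linarith) n
        calc (2 * s + 3 * ε) ^ n / s ≤ (5 * s) ^ n / s := by gcongr
          _ = 5 ^ n * s ^ n / s := by rw [mul_pow]
      calc ENNReal.ofReal (P / s) * ((n : ℝ≥0∞) ^ n
            * (ENNReal.ofReal ((2 * (s + ρ) / ε + 2) ^ n * ρ ^ n) * ιb))
          = ENNReal.ofReal (P / s) * ENNReal.ofReal ((2 * (s + ρ) / ε + 2) ^ n * ρ ^ n) * D1 := by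
            rw [hD1]; ring
        _ = ENNReal.ofReal (P / s * ((2 * (s + ρ) / ε + 2) ^ n * ρ ^ n)) * D1 := by
            rw [ENNReal.ofReal_mul (by positivity : (0:ℝ) ≤ P / s),
              ENNReal.ofReal_mul (by positivity : (0:ℝ) ≤ (2 * (s + ρ) / ε + 2) ^ n)]
        _ ≤ ENNReal.ofReal (5 ^ n * s ^ n / s) * D1 :=
            mul_le_mul_left (ENNReal.ofReal_le_ofReal hreal) _
    -- split the integral
    have hsubU : Set.Ioo (0:ℝ) 1 ⊆ (Set.Ioc 0 ρ ∪ Set.Ioc ρ ε ∪ Set.Ioc ε s ∪ Set.Ioc s 1) := by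
      intro t ht
      obtain ⟨ht0, ht1⟩ := ht
      simp only [Set.mem_union, Set.mem_Ioc]
      by_cases h1 : t ≤ ρ
      · exact Or.inl (Or.inl (Or.inl ⟨ht0, h1⟩))
      · push_neg at h1
        by_cases h2 : t ≤ ε
        · exact Or.inl (Or.inl (Or.inr ⟨h1, h2⟩))
        · push_neg at h2
          by_cases h3 : t ≤ s
          · exact Or.inl (Or.inr ⟨h2, h3⟩)
          · push_neg at h3
            exact Or.inr ⟨h3, ht1.le⟩
    have hsplit : (∫⁻ t in Set.Ioo (0:ℝ) 1,
          wolffMeasure n k s X₀ (ball X t) / ENNReal.ofReal (t ^ n))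
        ≤ (∫⁻ t in Set.Ioc (0:ℝ) ρ,
            wolffMeasure n k s X₀ (ball X t) / ENNReal.ofReal (t ^ n))
          + (∫⁻ t in Set.Ioc ρ ε,
            wolffMeasure n k s X₀ (ball X t) / ENNReal.ofReal (t ^ n))
          + (∫⁻ t in Set.Ioc ε s,
            wolffMeasure n k s X₀ (ball X t) / ENNReal.ofReal (t ^ n))
          + (∫⁻ t in Set.Ioc s 1,
            wolffMeasure n k s X₀ (ball X t) / ENNReal.ofReal (t ^ n)) := by
      refine le_trans (lintegral_mono_set hsubU) ?_
      refine le_trans (lintegral_union_le _ _ _) ?_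
      refine add_le_add ?_ le_rfl
      refine le_trans (lintegral_union_le _ _ _) ?_
      refine add_le_add ?_ le_rfl
      exact lintegral_union_le _ _ _
    have p1 : (∫⁻ t in Set.Ioc (0:ℝ) ρ,
        wolffMeasure n k s X₀ (ball X t) / ENNReal.ofReal (t ^ n))
        ≤ ENNReal.ofReal 1 * D1 := by
      have hpt : ∀ t ∈ Set.Ioc (0:ℝ) ρ,
          wolffMeasure n k s X₀ (ball X t) / ENNReal.ofReal (t ^ n)
            ≤ ENNReal.ofReal (P / s) * D1 := by
        intro t ht
        refine ENNReal.div_le_of_le_mul ?_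
        refine (hW1 t ht.1).trans (le_of_eq ?_)
        ring
      refine le_trans (setLIntegral_mono' measurableSet_Ioc hpt) ?_
      rw [setLIntegral_const, Real.volume_Ioc]
      have hreal : P / s * (ρ - 0) ≤ 1 := by
        rw [sub_zero, div_mul_eq_mul_div, div_le_one hs0]
        calc P * ρ = P * (hgt * ε) := by rw [hρ]
          _ ≤ P * ε := by nlinarith [hgt_le1, hεpos, hPpos]
          _ ≤ s := hPε
      calc ENNReal.ofReal (P / s) * D1 * ENNReal.ofReal (ρ - 0)
          = ENNReal.ofReal (P / s * (ρ - 0)) * D1 := by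
            rw [ENNReal.ofReal_mul (by positivity : (0:ℝ) ≤ P / s)]; ring
        _ ≤ ENNReal.ofReal 1 * D1 := mul_le_mul_left (ENNReal.ofReal_le_ofReal hreal) _
    have hc2 : (0:ℝ) ≤ 5 ^ n * ε ^ n / s / ρ ^ n :=
      div_nonneg (div_nonneg (mul_nonneg (by positivity) (pow_nonneg hεpos.le n)) hs0.le)
        (pow_nonneg hρpos.le n)
    have hc3 : (0:ℝ) ≤ 5 ^ n / s := div_nonneg (by positivity) hs0.le
    have hc4 : (0:ℝ) ≤ 5 ^ n * s ^ n / s :=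
      div_nonneg (mul_nonneg (by positivity) (pow_nonneg hs0.le n)) hs0.le
    have hfrac : ε ^ n / ρ ^ n = P := by
      rw [hρ, mul_pow, ← inv_eq_of_mul_eq_one_right hPn]
      rw [div_eq_iff (by positivity : (hgt ^ n * ε ^ n : ℝ) ≠ 0)]
      field_simp
    have p2 : (∫⁻ t in Set.Ioc ρ ε,
        wolffMeasure n k s X₀ (ball X t) / ENNReal.ofReal (t ^ n))
        ≤ ENNReal.ofReal (5 ^ n) * D1 := by
      have hpt : ∀ t ∈ Set.Ioc ρ ε,
          wolffMeasure n k s X₀ (ball X t) / ENNReal.ofReal (t ^ n)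
            ≤ ENNReal.ofReal (5 ^ n * ε ^ n / s / ρ ^ n) * D1 := by
        intro t ht
        refine ENNReal.div_le_of_le_mul ?_
        have h1 : (2 * t + 3 * ε) ^ n / s ≤ 5 ^ n * ε ^ n / s / ρ ^ n * ρ ^ n := by
          have hb : (2 * t + 3 * ε) ^ n ≤ (5 * ε) ^ n :=
            pow_le_pow_left₀ (by nlinarith [hρpos, ht.1, hεpos]) (by linarith [ht.2]) n
          rw [div_mul_cancel₀ _ (by positivity : (ρ ^ n : ℝ) ≠ 0)]
          calc (2*t+3*ε)^n / s ≤ (5*ε)^n / s := by gcongr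
            _ = 5 ^ n * ε ^ n / s := by rw [mul_pow]
        calc wolffMeasure n k s X₀ (ball X t)
            ≤ ENNReal.ofReal ((2 * t + 3 * ε) ^ n / s) * D1 := hW2 t (hρpos.trans ht.1).le
          _ ≤ ENNReal.ofReal (5 ^ n * ε ^ n / s / ρ ^ n * ρ ^ n) * D1 :=
              mul_le_mul_left (ENNReal.ofReal_le_ofReal h1) _
          _ = ENNReal.ofReal (5 ^ n * ε ^ n / s / ρ ^ n) * ENNReal.ofReal (ρ ^ n) * D1 := by
              rw [ENNReal.ofReal_mul hc2]
          _ ≤ ENNReal.ofReal (5 ^ n * ε ^ n / s / ρ ^ n) * ENNReal.ofReal (t ^ n) * D1 := by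
              refine mul_le_mul_left (mul_le_mul_right (ENNReal.ofReal_le_ofReal ?_) _) _
              exact pow_le_pow_left₀ hρpos.le ht.1.le n
          _ = ENNReal.ofReal (5 ^ n * ε ^ n / s / ρ ^ n) * D1 * ENNReal.ofReal (t ^ n) := by
              ring
      refine le_trans (setLIntegral_mono' measurableSet_Ioc hpt) ?_
      rw [setLIntegral_const, Real.volume_Ioc]
      have hreal : 5 ^ n * ε ^ n / s / ρ ^ n * (ε - ρ) ≤ 5 ^ n := by
        have e1 : 5 ^ n * ε ^ n / s / ρ ^ n * (ε - ρ)
            = 5 ^ n * ((ε ^ n / ρ ^ n) * ((ε - ρ) / s)) := by ring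
        have e3 : (ε ^ n / ρ ^ n) * ((ε - ρ) / s) ≤ 1 := by
          rw [hfrac]
          have h2 : P * (ε - ρ) ≤ s := by nlinarith [hPε, hρpos, hPpos]
          calc P * ((ε - ρ)/s) = P * (ε - ρ) / s := by ring
            _ ≤ 1 := by rw [div_le_one hs0]; exact h2
        rw [e1]
        calc (5:ℝ) ^ n * ((ε ^ n / ρ ^ n) * ((ε - ρ) / s)) ≤ 5 ^ n * 1 :=
              mul_le_mul_of_nonneg_left e3 (by positivity)
          _ = 5 ^ n := mul_one _
      calc ENNReal.ofReal (5 ^ n * ε ^ n / s / ρ ^ n) * D1 * ENNReal.ofReal (ε - ρ)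
          = ENNReal.ofReal (5 ^ n * ε ^ n / s / ρ ^ n * (ε - ρ)) * D1 := by
            rw [ENNReal.ofReal_mul hc2]; ring
        _ ≤ ENNReal.ofReal (5 ^ n) * D1 := mul_le_mul_left (ENNReal.ofReal_le_ofReal hreal) _
    have p3 : (∫⁻ t in Set.Ioc ε s,
        wolffMeasure n k s X₀ (ball X t) / ENNReal.ofReal (t ^ n))
        ≤ ENNReal.ofReal (5 ^ n) * D1 := by
      have hpt : ∀ t ∈ Set.Ioc ε s,
          wolffMeasure n k s X₀ (ball X t) / ENNReal.ofReal (t ^ n)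
            ≤ ENNReal.ofReal (5 ^ n / s) * D1 := by
        intro t ht
        refine ENNReal.div_le_of_le_mul ?_
        refine (hW2 t (hεpos.trans ht.1).le).trans ?_
        have h1 : (2 * t + 3 * ε) ^ n / s ≤ 5 ^ n / s * t ^ n := by
          have hb : (2 * t + 3 * ε) ^ n ≤ (5 * t) ^ n :=
            pow_le_pow_left₀ (by nlinarith [hεpos, ht.1]) (by linarith [ht.1.le]) n
          calc (2*t+3*ε)^n / s ≤ (5*t)^n / s := by gcongr
            _ = 5 ^ n / s * t ^ n := by rw [mul_pow]; ring
        calc ENNReal.ofReal ((2 * t + 3 * ε) ^ n / s) * D1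
            ≤ ENNReal.ofReal (5 ^ n / s * t ^ n) * D1 :=
              mul_le_mul_left (ENNReal.ofReal_le_ofReal h1) _
          _ = ENNReal.ofReal (5 ^ n / s) * D1 * ENNReal.ofReal (t ^ n) := by
              rw [ENNReal.ofReal_mul hc3]; ring
      refine le_trans (setLIntegral_mono' measurableSet_Ioc hpt) ?_
      rw [setLIntegral_const, Real.volume_Ioc]
      have hreal : 5 ^ n / s * (s - ε) ≤ 5 ^ n := by
        rw [div_mul_eq_mul_div, div_le_iff₀ hs0]
        nlinarith [hεpos, (by positivity : (0:ℝ) ≤ (5:ℝ)^n)]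
      calc ENNReal.ofReal (5 ^ n / s) * D1 * ENNReal.ofReal (s - ε)
          = ENNReal.ofReal (5 ^ n / s * (s - ε)) * D1 := by
            rw [ENNReal.ofReal_mul hc3]; ring
        _ ≤ ENNReal.ofReal (5 ^ n) * D1 := mul_le_mul_left (ENNReal.ofReal_le_ofReal hreal) _
    have p4 : (∫⁻ t in Set.Ioc s 1,
        wolffMeasure n k s X₀ (ball X t) / ENNReal.ofReal (t ^ n))
        ≤ ENNReal.ofReal (5 ^ n) * D1 := by
      have hpt : ∀ t ∈ Set.Ioc s 1,
          wolffMeasure n k s X₀ (ball X t) / ENNReal.ofReal (t ^ n)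
            ≤ (ENNReal.ofReal (5 ^ n * s ^ n / s) * D1) * ENNReal.ofReal ((t ^ n)⁻¹) := by
        intro t ht
        have ht0 : 0 < t := hs0.trans ht.1
        have hle : wolffMeasure n k s X₀ (ball X t) / ENNReal.ofReal (t ^ n)
            ≤ (ENNReal.ofReal (5 ^ n * s ^ n / s) * D1) / ENNReal.ofReal (t ^ n) :=
          ENNReal.div_le_div_right (hWtot _ measurableSet_ball) _
        refine hle.trans (le_of_eq ?_)
        rw [div_eq_mul_inv, ENNReal.ofReal_inv_of_pos (by positivity)]
      refine le_trans (setLIntegral_mono' measurableSet_Ioc hpt) ?_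
      have hgm : Measurable fun t : ℝ => ENNReal.ofReal ((t ^ n)⁻¹) := by
        measurability
      rw [lintegral_const_mul _ hgm]
      refine le_trans (mul_le_mul_right (tail_bound hn hs0 hs2.le) _) ?_
      have hreal : 5 ^ n * s ^ n / s * (s * (s ^ n)⁻¹) = 5 ^ n := by
        field_simp
      calc ENNReal.ofReal (5 ^ n * s ^ n / s) * D1 * ENNReal.ofReal (s * (s ^ n)⁻¹)
          = ENNReal.ofReal (5 ^ n * s ^ n / s * (s * (s ^ n)⁻¹)) * D1 := by
            rw [ENNReal.ofReal_mul hc4]; ring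
        _ ≤ ENNReal.ofReal (5 ^ n) * D1 := by rw [hreal]
    refine le_trans hsplit ?_
    refine le_trans (add_le_add (add_le_add (add_le_add p1 p2) p3) p4) ?_
    have hCn : ((n : ℝ≥0∞)) ^ n = ENNReal.ofReal ((n:ℝ) ^ n) := by
      rw [ENNReal.ofReal_pow (Nat.cast_nonneg n), ENNReal.ofReal_natCast]
    have hD1eq : D1 = ENNReal.ofReal ((n:ℝ) ^ n * B) := by
      rw [hD1, hCn, hιeq, ← ENNReal.ofReal_mul (by positivity)]
    have h5 : (1:ℝ) ≤ 5 ^ n := one_le_pow₀ (by norm_num)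
    have hnn : (0:ℝ) ≤ (n:ℝ) ^ n := by positivity
    have hq : (0:ℝ) ≤ ((4:ℝ) * n) ^ n / B := by positivity
    have hCfin : (1 + 5 ^ n + 5 ^ n + 5 ^ n : ℝ) * ((n:ℝ) ^ n * B) ≤ C := by
      have key : (1 + 5 ^ n + 5 ^ n + 5 ^ n : ℝ) * ((n:ℝ) ^ n * B)
          ≤ (B + 1) * ((n:ℝ) ^ n * 4 * 5 ^ n) := by
        nlinarith [mul_nonneg hnn hB.le, mul_nonneg hnn (sub_nonneg.2 h5),
          mul_nonneg (mul_nonneg hnn hB.le) (sub_nonneg.2 h5),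
          mul_nonneg hnn (mul_nonneg hB.le (sub_nonneg.2 h5))]
      rw [hC]
      linarith
    calc ENNReal.ofReal 1 * D1 + ENNReal.ofReal (5 ^ n) * D1 + ENNReal.ofReal (5 ^ n) * D1
          + ENNReal.ofReal (5 ^ n) * D1
        = (ENNReal.ofReal 1 + ENNReal.ofReal (5 ^ n) + ENNReal.ofReal (5 ^ n)
            + ENNReal.ofReal (5 ^ n)) * D1 := by ring
      _ = ENNReal.ofReal (1 + 5 ^ n + 5 ^ n + 5 ^ n) * D1 := by
          rw [← ENNReal.ofReal_add (by norm_num) (by positivity),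
            ← ENNReal.ofReal_add (by positivity) (by positivity),
            ← ENNReal.ofReal_add (by positivity) (by positivity)]
      _ = ENNReal.ofReal ((1 + 5 ^ n + 5 ^ n + 5 ^ n) * ((n:ℝ) ^ n * B)) := by
          rw [hD1eq, ← ENNReal.ofReal_mul (by positivity)]
      _ ≤ ENNReal.ofReal C := ENNReal.ofReal_le_ofReal hCfin
  · -- the lower bound on the mass
    set L : ℕ := ⌊s / (2 * (n:ℝ) * ε)⌋₊ with hL
    have hnR : (0:ℝ) < (n:ℝ) := by exact_mod_cast (by omega : 0 < n)
    have h4n : (4:ℝ) * n ≤ P := by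
      have hknat : 4 * n ≤ 2 ^ (k * n) := by
        have h1 : n < 2 ^ n := Nat.lt_two_pow_self
        have h2 : 4 * n < 2 ^ (n + 2) := by
          have : 2 ^ (n + 2) = 2 ^ n * 4 := by ring
          omega
        have h3 : 2 ^ (n + 2) ≤ 2 ^ (k * n) := by
          refine Nat.pow_le_pow_right (by norm_num) ?_
          have := Nat.mul_le_mul_right n hk
          omega
        omega
      rw [hP]
      calc (4:ℝ) * n = ((4 * n : ℕ) : ℝ) := by push_cast; ring
        _ ≤ ((2 ^ (k * n) : ℕ) : ℝ) := by exact_mod_cast hknat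
        _ = (2:ℝ) ^ (k * n) := by push_cast; ring
    have hsN : P ≤ s * N := by
      have h1 := mul_le_mul_of_nonneg_right hs1' hNpos.le
      calc P = P⁻¹ * N := by rw [hN2]; field_simp [hPpos.ne']
        _ ≤ s * N := h1
    have hx2 : (2:ℝ) ≤ s / (2 * n * ε) := by
      have heq : s / (2 * n * ε) = s * N / (2 * n) := by
        rw [hε]; field_simp
      rw [heq, le_div_iff₀ (by positivity)]
      linarith
    have hL2 : 2 ≤ L := Nat.le_floor (by exact_mod_cast hx2)
    have hLle : (L:ℝ) ≤ s / (2 * n * ε) := Nat.floor_le (by positivity)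
    have hLge : s / (4 * n * ε) ≤ (L:ℝ) := by
      have h1 : s / (2 * n * ε) - 1 < (L:ℝ) := Nat.sub_one_lt_floor _
      have h2 : s / (4 * n * ε) = s / (2 * n * ε) / 2 := by
        rw [div_div]; congr 1; ring
      rw [h2]
      linarith
    have hfit : (n:ℝ) * L * ε + ρ ≤ s := by
      have h1 : (n:ℝ) * L * ε ≤ s / 2 := by
        have heq : (n:ℝ) * ε * (s / (2 * n * ε)) = s / 2 := by
          field_simp
        calc (n:ℝ) * L * ε = (n * ε) * L := by ring
          _ ≤ (n * ε) * (s / (2 * n * ε)) :=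
              mul_le_mul_of_nonneg_left hLle (by positivity)
          _ = s / 2 := heq
      have h2 : ρ ≤ s / 2 := by
        calc ρ = hgt * ε := hρ
          _ ≤ ε := by nlinarith [hgt_le1, hεpos, hgtpos]
          _ ≤ s / 2 := hεs2
      linarith
    have hKmeas : wolffMeasure n k s X₀ (closedBall X₀ s ∩ latticeSheet n k)
        = ENNReal.ofReal (P / s)
          * μH[(n:ℝ)] (closedBall X₀ s ∩ latticeSheet n k) := by
      simp only [wolffMeasure, Measure.smul_apply, smul_eq_mul, Measure.restrict_apply_self]
      rfl
    rw [hKmeas, hKeq]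
    have hge := slice_ge (closedBall X₀.1 s ∩ latticeSet n ε ρ) (measurableSet_closedBall.inter hSm) hgt
    have hcnt : ENNReal.ofReal ((L:ℝ) ^ n * ρ ^ n) * ιb
        ≤ volume (closedBall X₀.1 s ∩ latticeSet n ε ρ) := by
      rw [Set.inter_comm]
      exact latticeSet_inter_ge hεpos hρpos h2ρε X₀.1 hfit
    refine le_trans ?_ (mul_le_mul_right (le_trans hcnt hge) _)
    rw [hιeq, ← ENNReal.ofReal_mul (by positivity : (0:ℝ) ≤ (L:ℝ) ^ n * ρ ^ n),
      ← ENNReal.ofReal_mul (by positivity : (0:ℝ) ≤ P / s)]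
    refine ENNReal.ofReal_le_ofReal ?_
    -- final real-number inequality
    have hLρ : (s * hgt / (4 * n)) ^ n ≤ (L:ℝ) ^ n * ρ ^ n := by
      have he : (s / (4 * n * ε)) * ρ = s * hgt / (4 * n) := by
        rw [hρ]; field_simp
      calc (s * hgt / (4 * n)) ^ n = ((s / (4 * n * ε)) * ρ) ^ n := by rw [he]
        _ = (s / (4 * n * ε)) ^ n * ρ ^ n := mul_pow _ _ _
        _ ≤ (L:ℝ) ^ n * ρ ^ n := by
            refine mul_le_mul_of_nonneg_right ?_ (pow_nonneg hρpos.le n)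
            exact pow_le_pow_left₀ (by positivity) hLge n
    have hval : P / s * ((s * hgt / (4 * n)) ^ n * B)
        = s ^ n / (s * ((4:ℝ) * n) ^ n) * B * (hgt ^ n * P) := by
      rw [div_pow, mul_pow]
      ring
    have hstep1 : s ^ n / (s * ((4:ℝ) * n) ^ n) * B ≤ P / s * ((L:ℝ) ^ n * ρ ^ n * B) := by
      calc s ^ n / (s * ((4:ℝ) * n) ^ n) * B
          = P / s * ((s * hgt / (4 * n)) ^ n * B) := by rw [hval, hPn, mul_one]
        _ ≤ P / s * ((L:ℝ) ^ n * ρ ^ n * B) := by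
            refine mul_le_mul_of_nonneg_left ?_ (by positivity)
            exact mul_le_mul_of_nonneg_right hLρ hB.le
    have hBC : ((4:ℝ) * n) ^ n ≤ B * C := by
      have hdb : B * (((4:ℝ) * n) ^ n / B) = ((4:ℝ) * n) ^ n := by
        field_simp
      have hpos1 : (0:ℝ) ≤ B * ((B + 1) * ((n:ℝ) ^ n * 4 * 5 ^ n)) := by positivity
      calc ((4:ℝ) * n) ^ n = B * (((4:ℝ) * n) ^ n / B) := hdb.symm
        _ ≤ B * ((B + 1) * ((n:ℝ) ^ n * 4 * 5 ^ n)) + B * (((4:ℝ) * n) ^ n / B) := by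
            linarith
        _ = B * C := by rw [hC]; ring
    have hstep2 : s ^ (n - 1) / C ≤ s ^ n / (s * ((4:ℝ) * n) ^ n) * B := by
      have hpow : s ^ (n - 1) = s ^ n / s := by
        rw [eq_div_iff hs0.ne', ← pow_succ]
        congr 1
        omega
      rw [hpow, div_div]
      have h1 : s ^ n / (s * C) ≤ s ^ n * B / (s * ((4:ℝ) * n) ^ n) := by
        rw [div_le_div_iff₀ (by positivity) (by positivity)]
        have h2 : (0:ℝ) ≤ s ^ n * s := by positivity
        nlinarith [mul_le_mul_of_nonneg_left hBC h2]
      calc s ^ n / (s * C) ≤ s ^ n * B / (s * ((4:ℝ) * n) ^ n) := h1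
        _ = s ^ n / (s * ((4:ℝ) * n) ^ n) * B := by ring
    calc s ^ (n - 1) / C ≤ s ^ n / (s * ((4:ℝ) * n) ^ n) * B := hstep2
      _ ≤ P / s * ((L:ℝ) ^ n * ρ ^ n * B) := hstep1
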